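/- Let M be a matroid on ground set E with a linear order, and let X be an initial flat of M (i.e., the elements of X precede all other elements in the order). Then every face of the reduced broken circuit complex of the complete principal truncation T_X(M), viewed as a subset of E \ X, is a face of the broken circuit complex of M restricted to E \ X. -/

import Mathlib

variable {α : Type*}

def Matroid.IsCircuitF (M : Matroid α) (C : Finset α) : Prop :=
  ↑C ⊆ M.E ∧ ¬ M.Indep ↑C ∧ ∀ D : Finset α, D ⊂ C → M.Indep ↑D

def MLoopless (M : Matroid α) : Prop := ∀ e ∈ M.E, M.Indep {e}

noncomputable def rkOf (M : Matroid α) (S : Set α) : ℕ :=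
  sSup {n | ∃ I : Set α, M.Indep I ∧ I ⊆ S ∧ I.ncard = n}

def ModularFlat (M : Matroid α) (X : Set α) : Prop :=
  M.IsFlat X ∧ ∀ Y : Set α, M.IsFlat Y →
    rkOf M X + rkOf M Y = rkOf M (X ∪ Y) + rkOf M (X ∩ Y)

section Ordered
variable [LinearOrder α]

def Matroid.IsBrokenCircuit (M : Matroid α) (B : Finset α) : Prop :=
  ∃ (C : Finset α) (i : α), M.IsCircuitF C ∧ i ∈ C ∧ (∀ j ∈ C, i ≤ j) ∧ B = C.erase i

def Matroid.BCFace (M : Matroid α) (S : Finset α) : Prop :=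
  ↑S ⊆ M.E ∧ ∀ B : Finset α, M.IsBrokenCircuit B → ¬ B ⊆ S

def InitialFlat (M : Matroid α) (X : Set α) : Prop :=
  M.IsFlat X ∧ ∀ x ∈ X, ∀ e ∈ M.E \ X, x < e

def TruncBrokenCircuit (M : Matroid α) (X : Set α) (B : Finset α) : Prop :=
  (∃ (C : Finset α) (i : α), M.IsCircuitF C ∧ ↑C ⊆ M.E \ X ∧ i ∈ C ∧
      (∀ j ∈ C, i ≤ j) ∧ B = C.erase i)
  ∨ (↑B ⊆ M.E \ X ∧ (M.closure ↑B ∩ X).Nonempty ∧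
      ∀ B' : Finset α, B' ⊂ B → ¬ (M.closure ↑B' ∩ X).Nonempty)

def TruncBC0Face (M : Matroid α) (X : Set α) (S : Finset α) : Prop :=
  ↑S ⊆ M.E \ X ∧ ∀ B : Finset α, TruncBrokenCircuit M X B → ¬ B ⊆ S

end Ordered

theorem stmt2 [LinearOrder α] (M : Matroid α) (hfin : M.E.Finite)
    (hll : MLoopless M) (X : Set α) (hX : InitialFlat M X) :
    ∀ S : Finset α, TruncBC0Face M X S → M.BCFace S ∧ ↑S ⊆ M.E \ X := by
  rintro S ⟨hSE, hS⟩
  refine ⟨⟨fun x hx => (hSE hx).1, ?_⟩, hSE⟩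
  rintro B ⟨C, i, hC, hiC, hmin, rfl⟩ hBS
  have hCE : ↑C ⊆ M.E := hC.1
  by_cases hCX : (↑C ∩ X : Set α).Nonempty
  · -- i ∈ X, and C ∩ X = {i}
    obtain ⟨x, hxC, hxX⟩ := hCX
    have hiX : i ∈ X := by
      by_contra hiX
      exact absurd (hmin x hxC) (not_le_of_gt (hX.2 x hxX i ⟨hCE hiC, hiX⟩))
    -- cl(C.erase i) meets X
    have hind : M.Indep ↑(C.erase i) := hC.2.2 _ (Finset.erase_ssubset hiC)
    have hicl : i ∈ M.closure ↑(C.erase i) := by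
      rw [hind.mem_closure_iff]
      left
      have : insert i (↑(C.erase i) : Set α) = ↑C := by
        rw [← Finset.coe_insert, Finset.insert_erase hiC]
      rw [this]
      exact ⟨hC.2.1, hCE⟩
    have hne : (M.closure ↑(C.erase i) ∩ X).Nonempty := ⟨i, hicl, hiX⟩
    -- pick a minimal-card subset B' of C.erase i with cl meeting X
    classical
    set P : Finset (Finset α) := (C.erase i).powerset.filter
      (fun B' : Finset α => (M.closure (B' : Set α) ∩ X).Nonempty) with hP
    have hPne : P.Nonempty := ⟨C.erase i, by simp only [hP, Finset.mem_filter, Finset.mem_powerset]; exact ⟨Finset.Subset.refl _, hne⟩⟩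
    obtain ⟨B', hB'P, hB'min⟩ := P.exists_min_image Finset.card hPne
    simp only [hP, Finset.mem_filter, Finset.mem_powerset] at hB'P
    have hB'S : B' ⊆ S := hB'P.1.trans hBS
    refine hS B' (Or.inr ⟨fun y hy => hSE (hB'S hy), hB'P.2, ?_⟩) hB'S
    · intro B'' hB'' hne''
      have : B'' ∈ P := by
        simp only [hP, Finset.mem_filter, Finset.mem_powerset]
        exact ⟨hB''.subset.trans hB'P.1, hne''⟩
      exact absurd (hB'min _ this) (not_le_of_gt (Finset.card_lt_card hB''))
  · -- C ⊆ E \ X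
    have hCEX : ↑C ⊆ M.E \ X := fun y hy =>
      ⟨hCE hy, fun hyX => hCX ⟨y, hy, hyX⟩⟩
    exact hS _ (Or.inl ⟨C, i, hC, hCEX, hiC, hmin, rfl⟩) hBS
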